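/- Let m be a nonzero ideal of the ring of integers O of a number field K. Then the quotient ring O/m is a Euclidean ring with respect to the function φ(ā) = N((a) + m): for all a, b ∈ O with b ∉ m, there exist q, r ∈ O such that a - (q·b + r) ∈ m, and either r ∈ m or N((r) + m) < N((b) + m). -/

import Mathlib

set_option maxHeartbeats 1000000

open NumberField

section Aux

variable {R : Type*} [CommRing R]

lemma aux_sup_mul (X u v : Ideal R) (h : u ⊔ v = ⊤) :
    (X ⊔ u) * (X ⊔ v) = X ⊔ u * v := by
  apply le_antisymm
  · rw [Ideal.sup_mul, Ideal.mul_sup, Ideal.mul_sup]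
    have h1 : X * X ≤ X ⊔ u * v := le_trans Ideal.mul_le_right le_sup_left
    have h2 : X * v ≤ X ⊔ u * v := le_trans Ideal.mul_le_left le_sup_left
    have h3 : u * X ≤ X ⊔ u * v := le_trans Ideal.mul_le_right le_sup_left
    have h4 : u * v ≤ X ⊔ u * v := le_sup_right
    exact sup_le (sup_le h1 h2) (sup_le h3 h4)
  · have h5 : u * v ≤ (X ⊔ u) * (X ⊔ v) := Ideal.mul_mono le_sup_right le_sup_right
    have h6 : X * u ≤ (X ⊔ u) * (X ⊔ v) := by
      rw [mul_comm]; exact Ideal.mul_mono le_sup_right le_sup_left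
    have h7 : X * v ≤ (X ⊔ u) * (X ⊔ v) := Ideal.mul_mono le_sup_left le_sup_right
    have hX : X ≤ (X ⊔ u) * (X ⊔ v) := by
      have hX2 : X = X * u ⊔ X * v := by
        rw [← Ideal.mul_sup, h, Ideal.mul_top]
      exact le_trans (le_of_eq hX2) (sup_le h6 h7)
    exact sup_le hX h5

lemma aux_sup_prod {ι : Type*} (X : Ideal R) (s : Finset ι) (w : ι → Ideal R)
    (h : ∀ i ∈ s, ∀ j ∈ s, i ≠ j → w i ⊔ w j = ⊤) :
    X ⊔ ∏ i ∈ s, w i = ∏ i ∈ s, (X ⊔ w i) := by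
  classical
  induction s using Finset.cons_induction with
  | empty => simp [Ideal.one_eq_top]
  | cons a s ha ih =>
    rw [Finset.prod_cons, Finset.prod_cons,
      ← ih (fun i hi j hj hij => h i (Finset.mem_cons_of_mem hi) j
        (Finset.mem_cons_of_mem hj) hij),
      aux_sup_mul]
    exact Ideal.sup_prod_eq_top fun i hi =>
      h a (Finset.mem_cons_self a s) i (Finset.mem_cons_of_mem hi)
        (fun he => ha (he ▸ hi))

lemma aux_span_sup_congr (x y : R) (w : Ideal R) (h : x - y ∈ w) :
    Ideal.span {x} ⊔ w = Ideal.span {y} ⊔ w := by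
  have key : ∀ u v : R, u - v ∈ w → Ideal.span {u} ⊔ w ≤ Ideal.span {v} ⊔ w := by
    intro u v huv
    refine sup_le ?_ le_sup_right
    rw [Ideal.span_le, Set.singleton_subset_iff]
    have : u = v + (u - v) := by ring
    rw [this]
    exact Submodule.add_mem _
      (Ideal.mem_sup_left (Ideal.mem_span_singleton_self v))
      (Ideal.mem_sup_right huv)
  exact le_antisymm (key x y h) (key y x (by simpa using w.neg_mem h))

end Aux

lemma aux_absNorm_lt {S : Type*} [CommRing S] [IsDomain S] [IsDedekindDomain S]
    [Module.Free ℤ S] [Module.Finite ℤ S] [Infinite S]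
    {I J : Ideal S} (hI : I ≠ ⊥) (h : I < J) :
    Ideal.absNorm J < Ideal.absNorm I := by
  obtain ⟨C, rfl⟩ : J ∣ I := Ideal.dvd_iff_le.mpr h.le
  have hnz : Ideal.absNorm (J * C) ≠ 0 := by
    rw [Ne, Ideal.absNorm_eq_zero_iff]
    exact hI
  rw [map_mul] at hnz ⊢
  have hJ : 0 < Ideal.absNorm J := Nat.pos_of_ne_zero (fun h0 => hnz (by rw [h0, zero_mul]))
  have hC : Ideal.absNorm C ≠ 1 := by
    intro h1
    rw [Ideal.absNorm_eq_one_iff] at h1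
    rw [h1, Ideal.mul_top] at h
    exact lt_irrefl J h
  have hC0 : Ideal.absNorm C ≠ 0 := fun h0 => hnz (by rw [h0, mul_zero])
  have : 1 < Ideal.absNorm C := by omega
  calc Ideal.absNorm J = Ideal.absNorm J * 1 := (mul_one _).symm
    _ < Ideal.absNorm J * Ideal.absNorm C := mul_lt_mul_of_pos_left this hJ

theorem stmt_0 (K : Type*) [Field K] [NumberField K]
    (m : Ideal (RingOfIntegers K)) (hm : m ≠ ⊥)
    (a b : RingOfIntegers K) (hb : b ∉ m) :
    ∃ q r : RingOfIntegers K,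
      a - (q * b + r) ∈ m ∧
        (r ∈ m ∨
          Ideal.absNorm (Ideal.span {r} ⊔ m) < Ideal.absNorm (Ideal.span {b} ⊔ m)) := by
  classical
  by_cases ha : a ∈ Ideal.span {b} ⊔ m
  · obtain ⟨x, hx, t, ht, hxt⟩ := Submodule.mem_sup.mp ha
    obtain ⟨q, rfl⟩ := Ideal.mem_span_singleton'.mp hx
    exact ⟨q, t, by rw [← hxt]; simp, Or.inl ht⟩
  -- main case : a ∉ (b) ⊔ m
  set ν := UniqueFactorizationMonoid.normalizedFactors m with hν
  set s : Finset (Ideal (RingOfIntegers K)) := ν.toFinset with hs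
  set e : Ideal (RingOfIntegers K) → ℕ := fun P => ν.count P with he
  set w : Ideal (RingOfIntegers K) → Ideal (RingOfIntegers K) := fun P => P ^ e P with hw
  have hprime : ∀ P ∈ s, Prime P := fun P hP =>
    UniqueFactorizationMonoid.prime_of_normalized_factor P (Multiset.mem_toFinset.mp hP)
  have hprod : ∏ P ∈ s, w P = m := by
    rw [hw, hs, he, ← Finset.prod_multiset_count]
    exact associated_iff_eq.mp (UniqueFactorizationMonoid.prod_normalizedFactors hm)
  -- pairwise coprimality of the prime power components
  have hcopP : ∀ P ∈ s, ∀ Q ∈ s, P ≠ Q → P ⊔ Q = ⊤ := by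
    intro P hP Q hQ hne
    have hPp := hprime P hP
    have hQp := hprime Q hQ
    have hPm : P.IsMaximal := (Ideal.isPrime_of_prime hPp).isMaximal hPp.ne_zero
    have hQm : Q.IsMaximal := (Ideal.isPrime_of_prime hQp).isMaximal hQp.ne_zero
    exact Ideal.IsMaximal.coprime_of_ne hPm hQm hne
  have hcop : ∀ P ∈ s, ∀ Q ∈ s, P ≠ Q → w P ⊔ w Q = ⊤ := by
    intro P hP Q hQ hne
    have : IsCoprime P Q := Ideal.isCoprime_iff_sup_eq.mpr (hcopP P hP Q hQ hne)
    exact Ideal.isCoprime_iff_sup_eq.mp (this.pow)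
  have hwne : ∀ P ∈ s, w P ≠ ⊥ := by
    intro P hP
    exact pow_ne_zero _ (hprime P hP).ne_zero
  -- per component solutions
  have key : ∀ P ∈ s, ∃ qP rP : RingOfIntegers K,
      a - (qP * b + rP) ∈ w P ∧
      (Ideal.span {b} ⊔ w P) ≤ (Ideal.span {rP} ⊔ w P) ∧
      (a ∉ Ideal.span {b} ⊔ w P → (Ideal.span {b} ⊔ w P) < (Ideal.span {rP} ⊔ w P)) := by
    intro P hP
    by_cases haP : a ∈ Ideal.span {b} ⊔ w P
    · obtain ⟨x, hx, t, ht, hxt⟩ := Submodule.mem_sup.mp haP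
      obtain ⟨c, rfl⟩ := Ideal.mem_span_singleton'.mp hx
      refine ⟨c - 1, b, ?_, le_refl _, fun hcon => absurd haP hcon⟩
      have : a - ((c - 1) * b + b) = t := by rw [← hxt]; ring
      rw [this]; exact ht
    · refine ⟨0, a, by simp, ?_, fun _ => ?_⟩ <;>
      · -- both ideals divide w P = P ^ e P, hence are comparable powers of P
        have hdvd1 : (Ideal.span {a} ⊔ w P) ∣ P ^ e P :=
          Ideal.dvd_iff_le.mpr le_sup_right
        have hdvd2 : (Ideal.span {b} ⊔ w P) ∣ P ^ e P :=
          Ideal.dvd_iff_le.mpr le_sup_right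
        obtain ⟨i, hi, hiA⟩ := (dvd_prime_pow (hprime P hP) _).mp hdvd1
        obtain ⟨j, hj, hjB⟩ := (dvd_prime_pow (hprime P hP) _).mp hdvd2
        rw [associated_iff_eq] at hiA hjB
        have hle : (Ideal.span {b} ⊔ w P) ≤ (Ideal.span {a} ⊔ w P) := by
          rcases le_total i j with hij | hij
          · rw [hiA, hjB]; exact Ideal.pow_le_pow_right hij
          · exfalso
            apply haP
            have : (Ideal.span {a} ⊔ w P) ≤ (Ideal.span {b} ⊔ w P) := by
              rw [hiA, hjB]; exact Ideal.pow_le_pow_right hij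
            exact this (Ideal.mem_sup_left (Ideal.mem_span_singleton_self a))
        have hne : (Ideal.span {b} ⊔ w P) ≠ (Ideal.span {a} ⊔ w P) := by
          intro hEq
          exact haP (hEq ▸ Ideal.mem_sup_left (Ideal.mem_span_singleton_self a))
        first
          | exact hle
          | exact lt_of_le_of_ne hle hne
  choose qs rs hk1 hk2 hk3 using key
  -- CRT
  obtain ⟨q, hq⟩ := IsDedekindDomain.exists_forall_sub_mem_ideal (s := s)
    (fun I => I) e hprime (fun i hi j hj hij => hij) (fun P => qs P.1 P.2)
  obtain ⟨r, hr⟩ := IsDedekindDomain.exists_forall_sub_mem_ideal (s := s)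
    (fun I => I) e hprime (fun i hi j hj hij => hij) (fun P => rs P.1 P.2)
  refine ⟨q, r, ?_, Or.inr ?_⟩
  · -- membership in m
    have hcomp : ∀ P ∈ s, a - (q * b + r) ∈ w P := by
      intro P hP
      have h1 := hk1 P hP
      have h2 : q - qs P hP ∈ w P := hq P hP
      have h3 : r - rs P hP ∈ w P := hr P hP
      have : a - (q * b + r) =
          (a - (qs P hP * b + rs P hP)) - (q - qs P hP) * b - (r - rs P hP) := by ring
      rw [this]
      exact Submodule.sub_mem _ (Submodule.sub_mem _ h1 (Ideal.mul_mem_right b _ h2)) h3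
    rw [← hprod]
    rw [← Ideal.dvd_span_singleton]
    refine Finset.prod_dvd_of_coprime ?_ (fun P hP =>
      Ideal.dvd_span_singleton.mpr (hcomp P hP))
    intro P hP Q hQ hne
    exact Ideal.isCoprime_iff_sup_eq.mpr (hcop P hP Q hQ hne)
  · -- norm inequality
    have hsupr : Ideal.span {r} ⊔ m = ∏ P ∈ s, (Ideal.span {r} ⊔ w P) := by
      rw [← hprod]; exact aux_sup_prod _ s w hcop
    have hsupb : Ideal.span {b} ⊔ m = ∏ P ∈ s, (Ideal.span {b} ⊔ w P) := by
      rw [← hprod]; exact aux_sup_prod _ s w hcop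
    have hrP : ∀ P (hP : P ∈ s), Ideal.span {r} ⊔ w P = Ideal.span {rs P hP} ⊔ w P :=
      fun P hP => aux_span_sup_congr r (rs P hP) (w P) (hr P hP)
    -- there is a component where a is not in (b) ⊔ w P
    have hstrict : ∃ P ∈ s, a ∉ Ideal.span {b} ⊔ w P := by
      by_contra hc
      push_neg at hc
      apply ha
      have : (Ideal.span {b} ⊔ m) ∣ Ideal.span {a} := by
        rw [hsupb]
        refine Finset.prod_dvd_of_coprime ?_ (fun P hP =>
          Ideal.dvd_span_singleton.mpr (hc P hP))
        intro P hP Q hQ hne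
        refine Ideal.isCoprime_iff_sup_eq.mpr (top_le_iff.mp ?_)
        rw [← hcop P hP Q hQ hne]
        exact sup_le_sup le_sup_right le_sup_right
      exact Ideal.dvd_span_singleton.mp this
    rw [hsupr, hsupb, map_prod, map_prod]
    apply Finset.prod_lt_prod
    · intro P hP
      apply Nat.pos_of_ne_zero
      intro h0
      rw [Ideal.absNorm_eq_zero_iff] at h0
      exact hwne P hP (le_bot_iff.mp (h0 ▸ (le_sup_right :
        w P ≤ Ideal.span {r} ⊔ w P)))
    · intro P hP
      rw [hrP P hP]
      exact Nat.le_of_dvd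
        (Nat.pos_of_ne_zero (fun h0 => hwne P hP (le_bot_iff.mp
          ((Ideal.absNorm_eq_zero_iff.mp h0) ▸ (le_sup_right :
            w P ≤ Ideal.span {b} ⊔ w P)))))
        (Ideal.absNorm_dvd_absNorm_of_le (hk2 P hP))
    · obtain ⟨P, hP, haP⟩ := hstrict
      refine ⟨P, hP, ?_⟩
      rw [hrP P hP]
      exact aux_absNorm_lt
        (fun hbot => hwne P hP (le_bot_iff.mp (hbot ▸ (le_sup_right :
          w P ≤ Ideal.span {b} ⊔ w P))))
        (hk3 P hP haP)
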